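/- Let f : 𝔹ⁿ → 𝔹ᴺ be holomorphic with f(0) = 0, and let γ be a unitary transformation of ℂⁿ. Then there exists an automorphism ψ of 𝔹ᴺ with f ∘ γ = ψ ∘ f if and only if ‖f(γ(z))‖² = ‖f(z)‖² for all z ∈ 𝔹ⁿ. -/

import Mathlib

noncomputable section
open Metric Set

/-- An automorphism of the unit ball of `EuclideanSpace ℂ ι`: a holomorphic self-map of the
ball with a holomorphic inverse. -/
def IsBallAut {ι : Type} [Fintype ι] (ψ : EuclideanSpace ℂ ι → EuclideanSpace ℂ ι) : Prop :=
  DifferentiableOn ℂ ψ (ball (0 : EuclideanSpace ℂ ι) 1) ∧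
    MapsTo ψ (ball (0 : EuclideanSpace ℂ ι) 1) (ball (0 : EuclideanSpace ℂ ι) 1) ∧
    ∃ φ : EuclideanSpace ℂ ι → EuclideanSpace ℂ ι,
      DifferentiableOn ℂ φ (ball (0 : EuclideanSpace ℂ ι) 1) ∧
      MapsTo φ (ball (0 : EuclideanSpace ℂ ι) 1) (ball (0 : EuclideanSpace ℂ ι) 1) ∧
      (∀ z ∈ ball (0 : EuclideanSpace ℂ ι) 1, φ (ψ z) = z) ∧
      (∀ z ∈ ball (0 : EuclideanSpace ℂ ι) 1, ψ (φ z) = z)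

local notation "𝔼" n => EuclideanSpace ℂ (Fin n)

lemma conjconj {u : ℂ → ℂ} {t : ℂ} (h : DifferentiableAt ℂ u ((starRingEnd ℂ) t)) :
    DifferentiableAt ℂ (fun s => (starRingEnd ℂ) (u ((starRingEnd ℂ) s))) t := by
  have hd := h.hasDerivAt
  set d := deriv u ((starRingEnd ℂ) t) with hdd
  rw [hasDerivAt_iff_isLittleO] at hd
  have hconj : Filter.Tendsto (fun s : ℂ => (starRingEnd ℂ) s) (nhds t) (nhds ((starRingEnd ℂ) t)) :=
    (Complex.continuous_conj.tendsto t)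
  have H := hd.comp_tendsto hconj
  refine (HasDerivAt.differentiableAt (f' := (starRingEnd ℂ) d) ?_)
  rw [hasDerivAt_iff_isLittleO, Asymptotics.isLittleO_iff]
  rw [Asymptotics.isLittleO_iff] at H
  intro c hc
  filter_upwards [H hc] with s hs
  have e1 : starRingEnd ℂ (u (starRingEnd ℂ s)) - starRingEnd ℂ (u (starRingEnd ℂ t)) -
      (s - t) • starRingEnd ℂ d
      = starRingEnd ℂ (u (starRingEnd ℂ s) - u (starRingEnd ℂ t) -
        ((starRingEnd ℂ) s - (starRingEnd ℂ) t) • d) := by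
    simp only [map_sub, smul_eq_mul, map_mul, Complex.conj_conj]
  have e2 : ‖s - t‖ = ‖(starRingEnd ℂ) s - (starRingEnd ℂ) t‖ := by
    rw [← map_sub]; exact (RCLike.norm_conj _).symm
  rw [e1, RCLike.norm_conj, e2]
  simpa using hs

lemma polar {n N : ℕ} (f : (𝔼 n) → (𝔼 N))
    (hf : DifferentiableOn ℂ f (ball (0 : 𝔼 n) 1))
    (γ : (𝔼 n) ≃ₗᵢ[ℂ] (𝔼 n))
    (hnorm : ∀ z ∈ ball (0 : 𝔼 n) 1, ‖f (γ z)‖ ^ 2 = ‖f z‖ ^ 2)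
    {z w : 𝔼 n} (hz : z ∈ ball (0 : 𝔼 n) 1) (hw : w ∈ ball (0 : 𝔼 n) 1) :
    (inner ℂ (f (γ z)) (f (γ w)) : ℂ) = inner ℂ (f z) (f w) := by
  rw [mem_ball_zero_iff] at hz hw
  set v0 : 𝔼 n := z + ((1:ℂ)/2) • (w - z) with hv0
  set v1 : 𝔼 n := Complex.I • (w - z) with hv1
  set u : ℂ → (𝔼 n) := fun t => v0 + t • v1 with hu
  -- affine combination property of u
  have huaff : ∀ (t1 t2 : ℂ) (a b : ℝ), a + b = 1 →
      u (a • t1 + b • t2) = a • u t1 + b • u t2 := by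
    intro t1 t2 a b hab
    have h : (a:ℂ) + (b:ℂ) = 1 := by exact_mod_cast hab
    simp only [hu]
    match_scalars <;> simp only [Complex.coe_algebraMap, Complex.real_smul]
    · linear_combination -h/2
    · linear_combination -h/2
  -- special values
  have hu0 : u 0 = ((1:ℂ)/2) • z + ((1:ℂ)/2) • w := by
    simp only [hu, hv0, hv1]; module
  have huw : u (-(Complex.I/2)) = w := by
    simp only [hu, hv0, hv1, smul_smul]
    have : -(Complex.I/2) * Complex.I = 1/2 := by
      rw [neg_mul, div_mul_eq_mul_div, Complex.I_mul_I]; norm_num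
    rw [this]; module
  have huz : u (Complex.I/2) = z := by
    simp only [hu, hv0, hv1, smul_smul]
    have : Complex.I/2 * Complex.I = -(1/2) := by
      rw [div_mul_eq_mul_div, Complex.I_mul_I]; norm_num
    rw [this]; module
  set T : Set ℂ := {t | u t ∈ ball (0 : 𝔼 n) 1 ∧ u ((starRingEnd ℂ) t) ∈ ball (0 : 𝔼 n) 1} with hT
  have hucont : Continuous u := by
    apply continuous_const.add; exact (continuous_id.smul continuous_const)
  have hTopen : IsOpen T := by
    have h1 : IsOpen {t : ℂ | u t ∈ ball (0 : 𝔼 n) 1} := isOpen_ball.preimage hucont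
    have h2 : IsOpen {t : ℂ | u ((starRingEnd ℂ) t) ∈ ball (0 : 𝔼 n) 1} :=
      isOpen_ball.preimage (hucont.comp Complex.continuous_conj)
    exact h1.inter h2
  have hTconv : Convex ℝ T := by
    intro t1 ht1 t2 ht2 a b ha hb hab
    constructor
    · rw [huaff t1 t2 a b hab]
      exact convex_ball (0 : 𝔼 n) 1 ht1.1 ht2.1 ha hb hab
    · have : (starRingEnd ℂ) (a • t1 + b • t2)
          = a • (starRingEnd ℂ) t1 + b • (starRingEnd ℂ) t2 := by
        simp only [Complex.real_smul, map_add, map_mul, Complex.conj_ofReal]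
      rw [this, huaff _ _ a b hab]
      exact convex_ball (0 : 𝔼 n) 1 ht1.2 ht2.2 ha hb hab
  have h0T : (0:ℂ) ∈ T := by
    have hm : u 0 ∈ ball (0 : 𝔼 n) 1 := by
      rw [hu0, mem_ball_zero_iff]
      calc ‖((1:ℂ)/2) • z + ((1:ℂ)/2) • w‖ ≤ ‖((1:ℂ)/2) • z‖ + ‖((1:ℂ)/2) • w‖ := norm_add_le _ _
        _ = (1/2) * ‖z‖ + (1/2) * ‖w‖ := by
            rw [norm_smul, norm_smul]; norm_num
        _ < 1 := by nlinarith
    exact ⟨hm, by simpa using hm⟩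
  have ht₀ : -(Complex.I/2) ∈ T := by
    constructor
    · rw [huw, mem_ball_zero_iff]; exact hw
    · have : (starRingEnd ℂ) (-(Complex.I/2)) = Complex.I/2 := by
        rw [map_neg, map_div₀, Complex.conj_I, map_ofNat]; ring
      rw [this, huz, mem_ball_zero_iff]; exact hz
  -- the two holomorphic functions
  have hγball : MapsTo (⇑γ) (ball (0 : 𝔼 n) 1) (ball (0 : 𝔼 n) 1) := fun x hx => by
    rw [mem_ball_zero_iff, γ.norm_map]; rwa [mem_ball_zero_iff] at hx
  have hγdiff : Differentiable ℂ (⇑γ) := by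
    have := (γ.toContinuousLinearEquiv : (𝔼 n) ≃L[ℂ] (𝔼 n)).differentiable
    exact this
  set fγ : (𝔼 n) → (𝔼 N) := fun x => f (γ x) with hfγdef
  have hfγ : DifferentiableOn ℂ fγ (ball (0 : 𝔼 n) 1) :=
    hf.comp hγdiff.differentiableOn hγball
  have hu_diff : Differentiable ℂ u := by
    apply Differentiable.const_add
    exact differentiable_id.smul_const v1
  -- generic differentiability of the polarized function
  have hdiffgen : ∀ g : (𝔼 n) → (𝔼 N), DifferentiableOn ℂ g (ball (0 : 𝔼 n) 1) →
      DifferentiableOn ℂ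
        (fun t => ∑ j, (starRingEnd ℂ) (g (u ((starRingEnd ℂ) t)) j) * (g (u t) j)) T := by
    intro g hg t ht
    apply DifferentiableAt.differentiableWithinAt
    have h1 : ∀ (j : Fin N) (s₀ : ℂ), u s₀ ∈ ball (0 : 𝔼 n) 1 →
        DifferentiableAt ℂ (fun s => g (u s) j) s₀ := by
      intro j s₀ hmem
      have hg' : DifferentiableAt ℂ (fun s => g (u s)) s₀ :=
        (hg.differentiableAt (isOpen_ball.mem_nhds hmem)).comp s₀ (hu_diff s₀)
      exact ((EuclideanSpace.proj j : (𝔼 N) →L[ℂ] ℂ).differentiableAt).comp s₀ hg'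
    apply DifferentiableAt.fun_sum
    intro j _
    apply DifferentiableAt.mul
    · exact conjconj (h1 j ((starRingEnd ℂ) t) ht.2)
    · exact h1 j t ht.1
  set A : ℂ → ℂ :=
    fun t => ∑ j, (starRingEnd ℂ) (fγ (u ((starRingEnd ℂ) t)) j) * (fγ (u t) j) with hA
  set B : ℂ → ℂ :=
    fun t => ∑ j, (starRingEnd ℂ) (f (u ((starRingEnd ℂ) t)) j) * (f (u t) j) with hB
  have hAan : AnalyticOnNhd ℂ A T := (hdiffgen fγ hfγ).analyticOnNhd hTopen
  have hBan : AnalyticOnNhd ℂ B T := (hdiffgen f hf).analyticOnNhd hTopen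
  -- equality on real points
  have hreal : ∀ r : ℝ, ((r:ℂ) ∈ T) → A r = B r := by
    intro r hr
    have hc : (starRingEnd ℂ) (r:ℂ) = (r:ℂ) := Complex.conj_ofReal r
    have hsum : ∀ g : (𝔼 n) → (𝔼 N),
        (∑ j, (starRingEnd ℂ) (g (u ((starRingEnd ℂ) (r:ℂ))) j) * (g (u (r:ℂ)) j))
          = ((‖g (u (r:ℂ))‖ : ℂ))^2 := by
      intro g
      rw [hc]
      have e : (inner ℂ (g (u (r:ℂ))) (g (u (r:ℂ))) : ℂ)
          = ∑ j, (starRingEnd ℂ) (g (u (r:ℂ)) j) * (g (u (r:ℂ)) j) := by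
        rw [PiLp.inner_apply]; simp only [RCLike.inner_apply]
        exact Finset.sum_congr rfl fun _ _ => mul_comm _ _
      rw [← e]; exact inner_self_eq_norm_sq_to_K _
    have h2 := hnorm (u (r:ℂ)) hr.1
    calc A (r:ℂ) = ((‖fγ (u (r:ℂ))‖ : ℂ))^2 := hsum fγ
      _ = ((‖f (u (r:ℂ))‖ : ℂ))^2 := by exact_mod_cast h2
      _ = B (r:ℂ) := (hsum f).symm
  -- frequently equal near 0
  have hfreq : ∃ᶠ t in nhdsWithin (0:ℂ) {(0:ℂ)}ᶜ, A t = B t := by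
    obtain ⟨ε, hε, hball⟩ := Metric.isOpen_iff.1 hTopen 0 h0T
    rw [Filter.frequently_iff]
    intro U hU
    rw [Metric.mem_nhdsWithin_iff] at hU
    obtain ⟨δ, hδ, hsub⟩ := hU
    set r : ℝ := min ε δ / 2 with hrdef
    have hr : 0 < r := by positivity
    have hrε : r < ε := by
      have h1 := min_le_left ε δ; rw [hrdef]; linarith
    have hrδ : r < δ := by
      have h1 := min_le_right ε δ; rw [hrdef]; linarith
    refine ⟨(r:ℂ), hsub ⟨?_, ?_⟩, ?_⟩
    · rw [mem_ball, dist_zero_right, Complex.norm_real, Real.norm_of_nonneg hr.le]; exact hrδ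
    · simp only [mem_compl_iff, mem_singleton_iff]
      exact_mod_cast hr.ne'
    · apply hreal
      apply hball
      rw [mem_ball, dist_zero_right, Complex.norm_real, Real.norm_of_nonneg hr.le]; exact hrε
  have heqon := hAan.eqOn_of_preconnected_of_frequently_eq hBan hTconv.isPreconnected h0T hfreq
  have heq := heqon ht₀
  have hct₀ : (starRingEnd ℂ) (-(Complex.I/2)) = Complex.I/2 := by
    rw [map_neg, map_div₀, Complex.conj_I, map_ofNat]; ring
  simp only [hA, hB, hct₀, huz, huw] at heq
  rw [PiLp.inner_apply, PiLp.inner_apply]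
  simp only [RCLike.inner_apply]
  convert heq using 1 <;> exact Finset.sum_congr rfl fun _ _ => mul_comm _ _

lemma schwarz_norm_le {N : ℕ} (h : (𝔼 N) → (𝔼 N))
    (hd : DifferentiableOn ℂ h (ball (0 : 𝔼 N) 1))
    (hm : MapsTo h (ball (0 : 𝔼 N) 1) (ball (0 : 𝔼 N) 1))
    (h0 : h 0 = 0) {x : 𝔼 N} (hx : x ∈ ball (0 : 𝔼 N) 1) : ‖h x‖ ≤ ‖x‖ := by
  rcases eq_or_ne x 0 with rfl | hx0
  · simp [h0]
  rw [mem_ball_zero_iff] at hx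
  have hnx : ‖x‖ ≠ 0 := norm_ne_zero_iff.2 hx0
  set c : ℂ := (‖x‖ : ℂ) with hc
  have hc0 : c ≠ 0 := by simpa [hc] using hnx
  set uvec : 𝔼 N := c⁻¹ • x with huv
  have hu1 : ‖uvec‖ = 1 := by
    rw [huv, norm_smul, norm_inv, hc, Complex.norm_real, Real.norm_of_nonneg (norm_nonneg x),
      inv_mul_cancel₀ hnx]
  set g : ℂ → (𝔼 N) := fun l => h (l • uvec) with hg
  have hsm : ∀ l : ℂ, l ∈ ball (0:ℂ) 1 → (l • uvec) ∈ ball (0 : 𝔼 N) 1 := by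
    intro l hl
    rw [mem_ball_zero_iff] at hl ⊢
    rw [norm_smul, hu1, mul_one]; exact hl
  have hgd : DifferentiableOn ℂ g (ball (0:ℂ) 1) := by
    apply hd.comp (Differentiable.differentiableOn (differentiable_id.smul_const uvec)) hsm
  have hg0 : g 0 = 0 := by rw [hg]; simp [h0]
  have hgm : MapsTo g (ball (0:ℂ) 1) (ball (g 0) 1) := by
    rw [hg0]; exact fun l hl => hm (hsm l hl)
  have hcball : c ∈ ball (0:ℂ) 1 := by
    rw [mem_ball_zero_iff, hc, Complex.norm_real, Real.norm_of_nonneg (norm_nonneg x)]; exact hx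
  have := Complex.dist_le_div_mul_dist_of_mapsTo_ball hgd (hgm.mono_right ball_subset_closedBall) hcball
  rw [hg0, dist_zero_right, dist_zero_right, div_self one_ne_zero, one_mul] at this
  have hgc : g c = h x := by
    simp only [hg, huv, smul_smul, mul_inv_cancel₀ hc0, one_smul]
  rw [hgc] at this
  calc ‖h x‖ ≤ ‖c‖ := this
    _ = ‖x‖ := by rw [hc, Complex.norm_real, Real.norm_of_nonneg (norm_nonneg x)]

lemma exists_unitary {n N : ℕ} (f : (𝔼 n) → (𝔼 N))
    (γ : (𝔼 n) ≃ₗᵢ[ℂ] (𝔼 n))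
    (hpol : ∀ z ∈ ball (0 : 𝔼 n) 1, ∀ w ∈ ball (0 : 𝔼 n) 1,
      (inner ℂ (f (γ z)) (f (γ w)) : ℂ) = inner ℂ (f z) (f w)) :
    ∃ U : (𝔼 N) →ₗᵢ[ℂ] (𝔼 N), ∀ z ∈ ball (0 : 𝔼 n) 1, U (f z) = f (γ z) := by
  classical
  set Sset : Set ((𝔼 N) × (𝔼 N)) :=
    {p | ∃ z ∈ ball (0 : 𝔼 n) 1, p = (f z, f (γ z))} with hSset
  set G : Submodule ℂ ((𝔼 N) × (𝔼 N)) := Submodule.span ℂ Sset with hG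
  set Dmap : ((𝔼 N) × (𝔼 N)) → ((𝔼 N) × (𝔼 N)) →ₗ[ℂ] ℂ := fun g =>
    ((innerSL ℂ g.1).toLinearMap.comp (LinearMap.fst ℂ (𝔼 N) (𝔼 N))) -
      ((innerSL ℂ g.2).toLinearMap.comp (LinearMap.snd ℂ (𝔼 N) (𝔼 N))) with hD
  have hDapp : ∀ g q : ((𝔼 N) × (𝔼 N)), Dmap g q = (inner ℂ g.1 q.1 : ℂ) - inner ℂ g.2 q.2 := by
    intro g q; simp [hD]
  have step1 : ∀ p ∈ Sset, ∀ gg ∈ G, Dmap p gg = 0 := by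
    intro p hp
    have hle : G ≤ LinearMap.ker (Dmap p) := by
      rw [hG]
      apply Submodule.span_le.2
      intro q hq
      rw [SetLike.mem_coe, LinearMap.mem_ker, hDapp]
      obtain ⟨a, ha, rfl⟩ := hp
      obtain ⟨b, hb, rfl⟩ := hq
      rw [sub_eq_zero]
      exact (hpol a ha b hb).symm
    intro gg hgg
    exact LinearMap.mem_ker.1 (hle hgg)
  have step2 : ∀ gg ∈ G, ∀ hh ∈ G, (inner ℂ (Prod.fst gg) (Prod.fst hh) : ℂ) = inner ℂ gg.2 hh.2 := by
    intro gg hgg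
    have hle : G ≤ LinearMap.ker (Dmap gg) := by
      rw [hG]
      apply Submodule.span_le.2
      intro p hp
      rw [SetLike.mem_coe, LinearMap.mem_ker, hDapp]
      have h1 : Dmap p gg = 0 := step1 p hp gg hgg
      rw [hDapp] at h1
      rw [sub_eq_zero] at h1
      rw [sub_eq_zero, ← inner_conj_symm gg.1 p.1, ← inner_conj_symm gg.2 p.2, h1]
    intro hh hhh
    have := LinearMap.mem_ker.1 (hle hhh)
    rw [hDapp, sub_eq_zero] at this
    exact this
  have hkeynorm : ∀ gg : ((𝔼 N) × (𝔼 N)), gg ∈ G → ‖gg.1‖ = ‖gg.2‖ := by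
    intro gg hgg
    have h1 := step2 gg hgg gg hgg
    rw [inner_self_eq_norm_sq_to_K, inner_self_eq_norm_sq_to_K] at h1
    have h2 : ‖gg.1‖ ^ 2 = ‖gg.2‖ ^ 2 := by exact_mod_cast h1
    nlinarith [norm_nonneg gg.1, norm_nonneg gg.2]
  set R : G →ₗ[ℂ] (𝔼 N) := (LinearMap.fst ℂ (𝔼 N) (𝔼 N)).domRestrict G with hR
  have hRapp : ∀ a : G, R a = (a : (𝔼 N) × (𝔼 N)).1 := fun a => rfl
  have hRinj : Function.Injective R := by
    intro a b hab
    have h0 : R (a - b) = 0 := by rw [map_sub, hab, sub_self]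
    rw [hRapp] at h0
    have h1 : ‖((a - b : G) : (𝔼 N) × (𝔼 N)).2‖ = 0 := by
      rw [← hkeynorm _ (a - b).2, h0, norm_zero]
    have h2 : ((a - b : G) : (𝔼 N) × (𝔼 N)) = 0 := by
      apply Prod.ext
      · -- fst = 0
        simpa using h0
      · simpa using norm_eq_zero.1 h1
    have : (a - b : G) = 0 := Subtype.ext h2
    exact sub_eq_zero.1 this
  set e : G ≃ₗ[ℂ] LinearMap.range R := LinearEquiv.ofInjective R hRinj with he
  have heapp : ∀ gg : G, ((e gg : LinearMap.range R) : 𝔼 N) = (gg : (𝔼 N) × (𝔼 N)).1 := by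
    intro gg; rw [he]; rfl
  set Lmap : (LinearMap.range R) →ₗ[ℂ] (𝔼 N) :=
    ((LinearMap.snd ℂ (𝔼 N) (𝔼 N)).comp G.subtype).comp e.symm.toLinearMap with hL
  have hLapp : ∀ x : LinearMap.range R, Lmap x = ((e.symm x : G) : (𝔼 N) × (𝔼 N)).2 := fun x => rfl
  have hLnorm : ∀ x : LinearMap.range R, ‖Lmap x‖ = ‖x‖ := by
    intro x
    rw [hLapp]
    have h1 : ((e.symm x : G) : (𝔼 N) × (𝔼 N)).1 = (x : 𝔼 N) := by
      rw [← heapp (e.symm x), e.apply_symm_apply]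
    rw [← hkeynorm _ (e.symm x : G).2, h1]
    rfl
  set L : (LinearMap.range R) →ₗᵢ[ℂ] (𝔼 N) := ⟨Lmap, hLnorm⟩ with hLi
  refine ⟨L.extend, ?_⟩
  intro z hz
  have hmemG : (f z, f (γ z)) ∈ G := Submodule.subset_span ⟨z, hz, rfl⟩
  set g₀ : G := ⟨(f z, f (γ z)), hmemG⟩ with hg₀
  have hx : f z ∈ LinearMap.range R := ⟨g₀, rfl⟩
  set x : LinearMap.range R := ⟨f z, hx⟩ with hxdef
  have h1 : L.extend (f z) = L x := LinearIsometry.extend_apply L x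
  have h2 : e.symm x = g₀ := by
    apply e.injective
    rw [e.apply_symm_apply]
    apply Subtype.ext
    rw [heapp]
  rw [h1]
  show Lmap x = f (γ z)
  rw [hLapp, h2]

/-- For holomorphic `f : 𝔹ⁿ → 𝔹ᴺ` with `f 0 = 0` and a unitary `γ` of `ℂⁿ`,
there is an automorphism `ψ` of `𝔹ᴺ` with `f ∘ γ = ψ ∘ f` iff `‖f(γ z)‖² = ‖f z‖²` on the ball. -/
theorem stmt2 {n N : ℕ}
    (f : EuclideanSpace ℂ (Fin n) → EuclideanSpace ℂ (Fin N))
    (hf : DifferentiableOn ℂ f (ball (0 : EuclideanSpace ℂ (Fin n)) 1))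
    (hfm : MapsTo f (ball (0 : EuclideanSpace ℂ (Fin n)) 1) (ball (0 : EuclideanSpace ℂ (Fin N)) 1))
    (hf0 : f 0 = 0)
    (γ : EuclideanSpace ℂ (Fin n) ≃ₗᵢ[ℂ] EuclideanSpace ℂ (Fin n)) :
    (∃ ψ : EuclideanSpace ℂ (Fin N) → EuclideanSpace ℂ (Fin N), IsBallAut ψ ∧
        ∀ z ∈ ball (0 : EuclideanSpace ℂ (Fin n)) 1, f (γ z) = ψ (f z)) ↔
      (∀ z ∈ ball (0 : EuclideanSpace ℂ (Fin n)) 1, ‖f (γ z)‖ ^ 2 = ‖f z‖ ^ 2) := by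
  constructor
  · rintro ⟨ψ, ⟨hψd, hψm, φ, hφd, hφm, hφψ, hψφ⟩, hcomm⟩ z hz
    have h0ball : (0 : EuclideanSpace ℂ (Fin N)) ∈ ball (0 : EuclideanSpace ℂ (Fin N)) 1 :=
      mem_ball_self one_pos
    have hψ0 : ψ 0 = 0 := by
      have := hcomm 0 (mem_ball_self one_pos)
      rw [map_zero, hf0] at this
      exact this.symm
    have hφ0 : φ 0 = 0 := by
      have := hφψ 0 h0ball
      rwa [hψ0] at this
    have hfz : f z ∈ ball (0 : EuclideanSpace ℂ (Fin N)) 1 := hfm hz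
    have h1 : ‖ψ (f z)‖ ≤ ‖f z‖ := schwarz_norm_le ψ hψd hψm hψ0 hfz
    have h2 : ‖f z‖ ≤ ‖ψ (f z)‖ := by
      have h3 : ‖φ (ψ (f z))‖ ≤ ‖ψ (f z)‖ := schwarz_norm_le φ hφd hφm hφ0 (hψm hfz)
      rwa [hφψ _ hfz] at h3
    have h4 : ‖ψ (f z)‖ = ‖f z‖ := le_antisymm h1 h2
    rw [hcomm z hz, h4]
  · intro hn
    have hpol : ∀ z ∈ ball (0 : EuclideanSpace ℂ (Fin n)) 1,
        ∀ w ∈ ball (0 : EuclideanSpace ℂ (Fin n)) 1,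
        (inner ℂ (f (γ z)) (f (γ w)) : ℂ) = inner ℂ (f z) (f w) :=
      fun z hz w hw => polar f hf γ hn hz hw
    obtain ⟨U, hU⟩ := exists_unitary f γ hpol
    have hUsurj : Function.Surjective U.toLinearMap :=
      LinearMap.injective_iff_surjective.1 U.injective
    set Ueq : EuclideanSpace ℂ (Fin N) ≃ₗ[ℂ] EuclideanSpace ℂ (Fin N) :=
      LinearEquiv.ofBijective U.toLinearMap ⟨U.injective, hUsurj⟩ with hUeqdef
    have hUeq : ∀ x, Ueq x = U x := fun x => rfl
    refine ⟨fun y => U y, ⟨?_, ?_, fun y => Ueq.symm y, ?_, ?_, ?_, ?_⟩, ?_⟩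
    · exact (LinearMap.toContinuousLinearMap U.toLinearMap).differentiable.differentiableOn
    · intro y hy
      rw [mem_ball_zero_iff] at hy ⊢
      rw [U.norm_map]; exact hy
    · exact (LinearMap.toContinuousLinearMap Ueq.symm.toLinearMap).differentiable.differentiableOn
    · intro y hy
      rw [mem_ball_zero_iff] at hy ⊢
      calc ‖Ueq.symm y‖ = ‖U (Ueq.symm y)‖ := (U.norm_map _).symm
        _ = ‖Ueq (Ueq.symm y)‖ := by rw [hUeq]
        _ = ‖y‖ := by rw [Ueq.apply_symm_apply]
      exact hy
    · intro y _
      show Ueq.symm (U y) = y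
      rw [← hUeq y, Ueq.symm_apply_apply]
    · intro y _
      show U (Ueq.symm y) = y
      rw [← hUeq, Ueq.apply_symm_apply]
    · exact fun z hz => (hU z hz).symm
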